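/- arXiv:1812.01451 — 3 statements merged into one kernel-verified Lean document; each statement's English description precedes it below -/
import Mathlib

section
/- Let h, g ∈ ℝ³ and set v = h + g/2, w = h − g/2. Then for all multi-indices α, κ ∈ ℕ³, H^α(v) H^κ(w) = Σ_{α'+κ' = α+κ} a_{α'κ'}^{ακ} H^{α'}(√2 h) H^{κ'}(g/√2), where the sum is over all pairs of multi-indices α', κ' ∈ ℕ³ with α' + κ' = α + κ (componentwise), and a_{α'κ'}^{ακ} = ∏_{i=1}^3 a_{α'_i κ'_i}^{α_i κ_i}. -/
open MeasureTheory Real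
open scoped BigOperators Classical

noncomputable section

/-- Velocity space ℝ³. -/
abbrev V3 := Fin 3 → ℝ

/-- Euclidean norm |v| on ℝ³. -/
def nrm (v : V3) : ℝ := Real.sqrt (∑ i, v i ^ 2)

/-- The (normalized) Maxwellian M(v) = (2π)^{-3/2} exp(-|v|²/2). -/
def Mxw (v : V3) : ℝ := (2 * π) ^ (-(3 : ℝ) / 2) * Real.exp (-(∑ i, v i ^ 2) / 2)

/-- |α| = α₁ + α₂ + α₃ for a multi-index. -/
def degIdx (α : Fin 3 → ℕ) : ℕ := α 0 + α 1 + α 2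

/-- α! = α₁! α₂! α₃! for a multi-index. -/
def multiFact (α : Fin 3 → ℕ) : ℕ := (α 0).factorial * (α 1).factorial * (α 2).factorial

/-- Multidimensional Hermite polynomial
`H^α(v) = ((-1)^{|α|}/M(v)) ∂^{|α|} M(v) / ∂v₁^{α₁} ∂v₂^{α₂} ∂v₃^{α₃}`. -/
def Herm (α : Fin 3 → ℕ) (v : V3) : ℝ :=
  ((-1 : ℝ) ^ degIdx α / Mxw v) *
    iteratedDeriv (α 0) (fun x1 =>
      iteratedDeriv (α 1) (fun x2 =>
        iteratedDeriv (α 2) (fun x3 => Mxw ![x1, x2, x3]) (v 2)) (v 1)) (v 0)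

/-- Partial derivative ∂f/∂vᵢ. -/
def pd (i : Fin 3) (f : V3 → ℝ) (v : V3) : ℝ := fderiv ℝ f v (Pi.single i 1)

/-- Divergence of a vector field on ℝ³. -/
def div3 (F : V3 → V3) (v : V3) : ℝ := ∑ i, pd i (fun w => F w i) v

/-- Collision kernel matrix A(v) = Λ|v|^{γ+2} Π(v), Π_{ij}(v) = δ_{ij} - vᵢvⱼ/|v|². -/
def Aker (Λ γ : ℝ) (v : V3) (i j : Fin 3) : ℝ :=
  Λ * nrm v ^ (γ + 2) * ((if i = j then (1 : ℝ) else 0) - v i * v j / nrm v ^ 2)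

/-- Fokker-Planck-Landau collision operator
`Q[f](v) = ∇_v · ∫ A(v-v*) (f(v*)∇_v f(v) - f(v)∇_{v*} f(v*)) dv*`. -/
def Qcol (Λ γ : ℝ) (f : V3 → ℝ) (v : V3) : ℝ :=
  div3 (fun w i =>
    ∫ w₁ : V3, ∑ j, Aker Λ γ (w - w₁) i j * (f w₁ * pd j f w - f w * pd j f w₁)) v

/-- G_{st}(γ,p,q) = ∫ |g|^γ g_s g_t H^p(g) H^q(g) M(g) dg. -/
def Gst (γ : ℝ) (s t : Fin 3) (p q : Fin 3 → ℕ) : ℝ :=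
  ∫ g : V3, nrm g ^ γ * g s * g t * Herm p g * Herm q g * Mxw g

/-- Generalized binomial coefficient C(x,k) = x(x-1)⋯(x-k+1)/k!. -/
def genBinom (x : ℝ) (k : ℕ) : ℝ := (∏ j ∈ Finset.range k, (x - j)) / k.factorial

/-- Scalar coefficient a_{pq}^{λκ}, zero unless p+q = λ+κ. -/
def aCoe (p q lam kap : ℕ) : ℝ :=
  if p + q = lam + kap then
    (2 : ℝ) ^ (-(((p : ℝ) + q) / 2)) * lam.factorial * kap.factorial *
      ∑ s ∈ Finset.Icc (p - kap) (min p lam),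
        (-1 : ℝ) ^ ((q : ℤ) - lam + s) /
          ((s.factorial * (lam - s).factorial * (p - s).factorial *
            ((q : ℤ) - lam + s).toNat.factorial : ℕ) : ℝ)
  else 0

/-- Multi-index coefficient a_{p,q}^{λ,κ} = ∏ᵢ a_{pᵢqᵢ}^{λᵢκᵢ}. -/
def aMulti (p q lam kap : Fin 3 → ℕ) : ℝ := ∏ i, aCoe (p i) (q i) (lam i) (kap i)

/-- B_p^q(γ,s,t) = -G_{st}(γ,p,q) + δ_{st} Σ_r G_{rr}(γ,p,q). -/
def Bcoe (γ : ℝ) (s t : Fin 3) (p q : Fin 3 → ℕ) : ℝ :=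
  -Gst γ s t p q + (if s = t then (1 : ℝ) else 0) * ∑ r, Gst γ r r p q

/-- The expansion coefficient A_α^{λ,κ} of the FPL collision operator. -/
def coeA (Λ γ : ℝ) (α lam kap : Fin 3 → ℕ) : ℝ :=
  (1 / (multiFact α : ℝ)) *
    ∫ v : V3, Herm α v *
      div3 (fun w i =>
        ∫ w₁ : V3, ∑ j, Aker Λ γ (w - w₁) i j *
          (Herm lam w₁ * Mxw w₁ * pd j (fun u => Herm kap u * Mxw u) w -
            Herm lam w * Mxw w * pd j (fun u => Herm kap u * Mxw u) w₁)) v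

/-- Multi-indices p with |p| < n, i.e. 0 ≤ |p| ≤ n-1. -/
def idxLt (n : ℕ) : Finset (Fin 3 → ℕ) :=
  (Fintype.piFinset (fun _ : Fin 3 => Finset.range n)).filter (fun p => degIdx p < n)

/-- Pairs of multi-indices (p,q) with p + q = σ. -/
def idxPairs (σ : Fin 3 → ℕ) : Finset ((Fin 3 → ℕ) × (Fin 3 → ℕ)) :=
  ((Fintype.piFinset fun i => Finset.range (σ i + 1)) ×ˢ
      (Fintype.piFinset fun i => Finset.range (σ i + 1))).filter fun x => x.1 + x.2 = σ

/-- Multi-index permutation operator exchanging the i-th and j-th entries. -/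
def swapIdx (i j : Fin 3) (p : Fin 3 → ℕ) : Fin 3 → ℕ := p ∘ Equiv.swap i j

/-- Associated Legendre function
`P_l^m(x) = ((-1)^m/(2^l l!)) (1-x²)^{m/2} d^{l+m}/dx^{l+m} (x²-1)^l`. -/
def assocLegendre (l : ℕ) (m : ℤ) (x : ℝ) : ℝ :=
  ((-1 : ℝ) ^ m * (1 - x ^ 2) ^ ((m : ℝ) / 2) / (2 ^ l * l.factorial)) *
    iteratedDeriv ((l : ℤ) + m).toNat (fun y => (y ^ 2 - 1) ^ l) x

/-- Spherical harmonic Y_l^m(n), written in terms of cos θ = n₃ and φ = arg(n₁ + i n₂). -/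
def sphHarm (l : ℕ) (m : ℤ) (n : V3) : ℂ :=
  ((Real.sqrt ((2 * l + 1) / (4 * π) * ((l : ℤ) - m).toNat.factorial /
      ((l : ℤ) + m).toNat.factorial) * assocLegendre l m (n 2) : ℝ) : ℂ) *
    Complex.exp (Complex.I * m * (Complex.arg ((n 0 : ℂ) + n 1 * Complex.I) : ℝ))

/-- Spherical harmonic with the convention Y_{l'}^{m'} = 0 when |m'| > l' or l' < 0. -/
def sphHarmZ (l m : ℤ) (n : V3) : ℂ :=
  if 0 ≤ l ∧ m.natAbs ≤ l.toNat then sphHarm l.toNat m n else 0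

/-- Surface integral over the unit sphere S² in spherical coordinates. -/
def sphereIntegral (F : V3 → ℂ) : ℂ :=
  ∫ θ in (0 : ℝ)..π, ∫ φ in (0 : ℝ)..(2 * π),
    F ![Real.sin θ * Real.cos φ, Real.sin θ * Real.sin φ, Real.cos θ] * (Real.sin θ : ℂ)

/-- Laguerre polynomial L_n^{(β)}(x) = (x^{-β} eˣ / n!) dⁿ/dxⁿ [x^{n+β} e^{-x}]. -/
def laguerre (n : ℕ) (β : ℝ) (x : ℝ) : ℝ :=
  (x ^ (-β) * Real.exp x / n.factorial) *
    iteratedDeriv n (fun y => y ^ ((n : ℝ) + β) * Real.exp (-y)) x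

/-- Normalized Burnett polynomial B_{α̂}(v) with α̂ = (l, m, nn). -/
def Burnett (l : ℕ) (m : ℤ) (nn : ℕ) (v : V3) : ℂ :=
  ((Real.sqrt ((2 : ℝ) ^ (1 - (l : ℝ)) * π ^ ((3 : ℝ) / 2) * nn.factorial /
        Real.Gamma (nn + l + 3 / 2)) *
      laguerre nn ((l : ℝ) + 1 / 2) (nrm v ^ 2 / 2) * nrm v ^ l : ℝ) : ℂ) *
    sphHarm l m (fun i => v i / nrm v)

/-- Connection coefficient C_{α̂}^α = ∫ B_{α̂}(v) H^α(v) M(v) dv. -/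
def coeC (l : ℕ) (m : ℤ) (nn : ℕ) (α : Fin 3 → ℕ) : ℂ :=
  ∫ v : V3, Burnett l m nn v * ((Herm α v * Mxw v : ℝ) : ℂ)

/-- Burnett indices α̂ = (α̂₁,α̂₂,α̂₃), α̂₂ ∈ {-α̂₁,…,α̂₁}, with |α̂|_B = α̂₁ + 2α̂₃ = N. -/
def burnettIdx (N : ℕ) : Finset (ℕ × ℤ × ℕ) :=
  ((Finset.range (N + 1)) ×ˢ (Finset.Icc (-(N : ℤ)) N) ×ˢ (Finset.range (N + 1))).filter
    fun x => x.1 + 2 * x.2.2 = N ∧ x.2.1.natAbs ≤ x.1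

/-- D_{n₁n₂}^{l₁l₂} = √(n₁!n₂!/(Γ(n₁+l₁+3/2)Γ(n₂+l₂+3/2))). -/
def Dcoe (n1 n2 l1 l2 : ℕ) : ℝ :=
  Real.sqrt ((n1.factorial * n2.factorial : ℝ) /
    (Real.Gamma (n1 + l1 + 3 / 2) * Real.Gamma (n2 + l2 + 3 / 2)))

/-- K(μ,α,κ,m,n) = (-1)^{m+n} Γ(μ+1) Σᵢ C(μ-α,m-i) C(μ-κ,n-i) C(i+μ,i). -/
def Kcoe (μ a k : ℝ) (m n : ℕ) : ℝ :=
  (-1 : ℝ) ^ (m + n) * Real.Gamma (μ + 1) *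
    ∑ i ∈ Finset.range (min m n + 1),
      genBinom (μ - a) (m - i) * genBinom (μ - k) (n - i) * genBinom ((i : ℝ) + μ) i

/-- F_{st}(l₁,m₁,l₂,m₂) = ∫_{S²} n_s n_t Y_{l₁}^{m₁}(n) Y_{l₂}^{m₂}(n) dn. -/
def Fst (s t : Fin 3) (l1 : ℕ) (m1 : ℤ) (l2 : ℕ) (m2 : ℤ) : ℂ :=
  sphereIntegral fun n => ((n s * n t : ℝ) : ℂ) * sphHarm l1 m1 n * sphHarm l2 m2 n

/-- Kronecker delta on ℤ. -/
def kdZ (a b : ℤ) : ℝ := if a = b then 1 else 0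

/-- η_{lm}^μ as in the paper (l, m, μ integers, μ ∈ {-1,0,1}). -/
def eta (l m μ : ℤ) : ℝ :=
  Real.sqrt ((((l : ℝ) + (2 * kdZ 1 μ - 1) * m + kdZ 1 μ) *
      ((l : ℝ) - (2 * kdZ (-1) μ - 1) * m + kdZ (-1) μ)) /
    ((2 : ℝ) ^ μ.natAbs * (2 * l - 1) * (2 * l + 1)))

/-- General Maxwellian M_{ρ,u,θ}. -/
def Mgen (ρ θ : ℝ) (u : V3) (v : V3) : ℝ :=
  ρ / (2 * π * θ) ^ ((3 : ℝ) / 2) * Real.exp (-(nrm (v - u) ^ 2) / (2 * θ))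

/-- Hermite coefficient f_α = (1/α!) ∫ H^α(v) f(v) dv. -/
def hermCoeff (f : V3 → ℝ) (α : Fin 3 → ℕ) : ℝ :=
  (1 / (multiFact α : ℝ)) * ∫ v : V3, Herm α v * f v

/-- τ(t) = 1 - 0.4 e^{-4t}. -/
def tau (t : ℝ) : ℝ := 1 - 0.4 * Real.exp (-4 * t)

/-- The BKW distribution. -/
def fBKW (t : ℝ) (v : V3) : ℝ :=
  (2 * π * tau t) ^ (-(3 : ℝ) / 2) * Real.exp (-(nrm v ^ 2) / (2 * tau t)) *
    (1 + (1 - tau t) / tau t * (nrm v ^ 2 / (2 * tau t) - 3 / 2))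

/-! ### Auxiliary machinery for the Hermite product formula -/

open Polynomial

/-- One-dimensional probabilists' Hermite polynomial evaluated at a real. -/
def He (n : ℕ) (x : ℝ) : ℝ := Polynomial.aeval x (Polynomial.hermite n)

lemma derivative_hermite' (n : ℕ) :
    (Polynomial.hermite n).derivative = n • Polynomial.hermite (n - 1) := by
  induction n with
  | zero => simp [Polynomial.hermite_zero]
  | succ n ih =>
    rw [Polynomial.hermite_succ, derivative_sub, derivative_mul, derivative_X, one_mul, ih,
      derivative_smul]
    cases n with
    | zero => simp [Polynomial.hermite_zero]
    | succ m =>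
      simp only [Nat.add_sub_cancel]
      have h : X * Polynomial.hermite m - (Polynomial.hermite m).derivative
          = Polynomial.hermite (m + 1) := (Polynomial.hermite_succ m).symm
      rw [add_sub_assoc, mul_smul_comm, ← smul_sub, h, succ_nsmul, succ_nsmul, add_nsmul,
        one_nsmul]
      abel

lemma He_zero (x : ℝ) : He 0 x = 1 := by simp [He, Polynomial.hermite_zero]

lemma He_succ (n : ℕ) (x : ℝ) : He (n + 1) x = x * He n x - n * He (n - 1) x := by
  unfold He
  rw [Polynomial.hermite_succ, map_sub, map_mul, Polynomial.aeval_X, derivative_hermite',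
    map_nsmul, nsmul_eq_mul]

lemma He_neg (n : ℕ) (x : ℝ) : He n (-x) = (-1) ^ n * He n x := by
  induction n using Nat.strong_induction_on with
  | _ n ih =>
    match n with
    | 0 => simp [He_zero]
    | 1 => simp [He_succ, He_zero]
    | (m+2) =>
      have e1 : He (m+2) x = x * He (m+1) x - (m+1) * He m x := by
        have := He_succ (m+1) x; simpa using this
      have e2 : He (m+2) (-x) = (-x) * He (m+1) (-x) - (m+1) * He m (-x) := by
        have := He_succ (m+1) (-x); simpa using this
      rw [e1, e2, ih (m+1) (by omega), ih m (by omega)]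
      ring


def PP (a k : ℕ) : Polynomial ℝ := (1 + X) ^ a * (X - 1) ^ k

lemma natDegree_PP_le (a k : ℕ) : (PP a k).natDegree ≤ a + k := by
  refine le_trans Polynomial.natDegree_mul_le (add_le_add ?_ ?_) <;>
    refine le_trans Polynomial.natDegree_pow_le ?_
  · have : (1 + X : ℝ[X]).natDegree ≤ 1 := by
      refine le_trans (Polynomial.natDegree_add_le _ _) ?_
      simp
    calc a * (1 + X : ℝ[X]).natDegree ≤ a * 1 := Nat.mul_le_mul_left a this
    _ = a := by ring
  · have : (X - 1 : ℝ[X]).natDegree ≤ 1 := by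
      refine le_trans (Polynomial.natDegree_sub_le _ _) ?_
      simp
    calc k * (X - 1 : ℝ[X]).natDegree ≤ k * 1 := Nat.mul_le_mul_left k this
    _ = k := by ring

lemma coeff_PP_zero {a k p : ℕ} (h : a + k < p) : (PP a k).coeff p = 0 :=
  Polynomial.coeff_eq_zero_of_natDegree_lt (lt_of_le_of_lt (natDegree_PP_le a k) h)

lemma keyPoly (a k : ℕ) :
    (1 - X) * (PP a k).derivative + Polynomial.C ((a : ℝ) + k) * PP a k
      = Polynomial.C (2 * (a : ℝ)) * PP (a - 1) k := by
  have hD : (PP a k).derivative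
      = (a : ℝ[X]) * (1 + X) ^ (a - 1) * (X - 1) ^ k
        + (1 + X) ^ a * ((k : ℝ[X]) * (X - 1) ^ (k - 1)) := by
    unfold PP
    rw [derivative_mul, derivative_pow, derivative_pow]
    simp [mul_comm, mul_assoc, mul_left_comm]
  rw [hD]
  unfold PP
  simp only [map_add, map_mul, map_ofNat, map_one, map_zero, Polynomial.C_eq_natCast]
  cases a with
  | zero =>
    cases k with
    | zero => simp
    | succ c =>
      simp only [Nat.zero_sub, Nat.add_sub_cancel, pow_zero, Nat.cast_zero, Nat.cast_succ]
      rw [pow_succ (X - 1 : ℝ[X]) c]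
      push_cast
      ring
  | succ b =>
    cases k with
    | zero =>
      simp only [Nat.add_sub_cancel, pow_zero, Nat.cast_zero, Nat.cast_succ]
      rw [pow_succ (1 + X : ℝ[X]) b]
      push_cast
      ring
    | succ c =>
      simp only [Nat.add_sub_cancel, Nat.cast_succ]
      rw [pow_succ (1 + X : ℝ[X]) b, pow_succ (X - 1 : ℝ[X]) c]
      push_cast
      ring

lemma coeff_X_mul_deriv (P : ℝ[X]) (p : ℕ) : (X * P.derivative).coeff p = p * P.coeff p := by
  cases p with
  | zero => simp [Polynomial.mul_coeff_zero]
  | succ n => rw [Polynomial.coeff_X_mul, Polynomial.coeff_derivative]; push_cast; ring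

lemma coreStep (N : ℕ) (P : Polynomial ℝ) (hP : P.coeff (N + 1) = 0) (x y : ℝ) :
    (x + y) * ∑ p ∈ Finset.range (N + 1), P.coeff p * (He p x * He (N - p) y)
      = (∑ p ∈ Finset.range (N + 2), ((1 + X) * P).coeff p * (He p x * He (N + 1 - p) y))
      + ∑ p ∈ Finset.range N,
          ((1 - X) * P.derivative + Polynomial.C (N : ℝ) * P).coeff p
            * (He p x * He (N - 1 - p) y) := by
  have hx : ∀ p : ℕ, x * He p x = He (p + 1) x + p * He (p - 1) x := fun p => by
    rw [He_succ]; ring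
  -- expand the left side termwise
  have key : ∀ p ∈ Finset.range (N + 1),
      (x + y) * (P.coeff p * (He p x * He (N - p) y))
        = P.coeff p * (He (p + 1) x * He (N - p) y)
          + (p : ℝ) * P.coeff p * (He (p - 1) x * He (N - p) y)
          + (P.coeff p * (He p x * He (N - p + 1) y)
          + ((N : ℝ) - p) * P.coeff p * (He p x * He (N - p - 1) y)) := by
    intro p hp
    have hpN : p ≤ N := Nat.lt_succ_iff.mp (Finset.mem_range.mp hp)
    have h2 : y * He (N - p) y = He (N - p + 1) y + ((N : ℝ) - p) * He (N - p - 1) y := by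
      have := He_succ (N - p) y
      have hc : ((N - p : ℕ) : ℝ) = (N : ℝ) - p := by
        push_cast [Nat.cast_sub hpN]; ring
      rw [hc] at this
      linarith [this]
    have expand : (x + y) * (P.coeff p * (He p x * He (N - p) y))
        = P.coeff p * ((x * He p x) * He (N - p) y)
          + P.coeff p * (He p x * (y * He (N - p) y)) := by ring
    rw [expand, hx p, h2]
    ring
  rw [Finset.mul_sum, Finset.sum_congr rfl key, Finset.sum_add_distrib, Finset.sum_add_distrib,
    Finset.sum_add_distrib]
  -- A-sum
  have hA : ∑ p ∈ Finset.range (N + 1), P.coeff p * (He (p + 1) x * He (N - p) y)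
      = ∑ p ∈ Finset.range (N + 2), (X * P).coeff p * (He p x * He (N + 1 - p) y) := by
    conv_rhs => rw [Finset.sum_range_succ']
    simp only [Polynomial.coeff_X_mul, Polynomial.mul_coeff_zero, Polynomial.coeff_X_zero,
      zero_mul]
    rw [add_zero]
    refine Finset.sum_congr rfl fun p hp => ?_
    have hpN : p ≤ N := Nat.lt_succ_iff.mp (Finset.mem_range.mp hp)
    have : N + 1 - (p + 1) = N - p := by omega
    rw [this]
  -- B-sum
  have hB : ∑ p ∈ Finset.range (N + 1), (p : ℝ) * P.coeff p * (He (p - 1) x * He (N - p) y)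
      = ∑ p ∈ Finset.range N, P.derivative.coeff p * (He p x * He (N - 1 - p) y) := by
    rw [Finset.sum_range_succ']
    simp only [Nat.cast_zero, zero_mul, add_zero]
    refine Finset.sum_congr rfl fun p hp => ?_
    have : N - (p + 1) = N - 1 - p := by omega
    rw [this, Polynomial.coeff_derivative, Nat.add_sub_cancel]
    push_cast
    ring
  -- C-sum
  have hC : ∑ p ∈ Finset.range (N + 1), P.coeff p * (He p x * He (N - p + 1) y)
      = ∑ p ∈ Finset.range (N + 2), P.coeff p * (He p x * He (N + 1 - p) y) := by
    conv_rhs => rw [Finset.sum_range_succ]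
    rw [hP, zero_mul, add_zero]
    refine Finset.sum_congr rfl fun p hp => ?_
    have hpN : p ≤ N := Nat.lt_succ_iff.mp (Finset.mem_range.mp hp)
    have : N + 1 - p = N - p + 1 := by omega
    rw [this]
  -- D-sum
  have hD : ∑ p ∈ Finset.range (N + 1), ((N : ℝ) - p) * P.coeff p * (He p x * He (N - p - 1) y)
      = ∑ p ∈ Finset.range N, ((N : ℝ) - p) * P.coeff p * (He p x * He (N - 1 - p) y) := by
    rw [Finset.sum_range_succ]
    simp only [sub_self, zero_mul, add_zero]
    refine Finset.sum_congr rfl fun p hp => ?_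
    have : N - p - 1 = N - 1 - p := by omega
    rw [this]
  rw [hA, hB, hC, hD]
  -- now rearrange the right side
  have hRHS1 : ∀ p : ℕ, ((1 + X) * P).coeff p = P.coeff p + (X * P).coeff p := by
    intro p
    have : (1 + X) * P = P + X * P := by ring
    rw [this, Polynomial.coeff_add]
  have hRHS2 : ∀ p : ℕ, ((1 - X) * P.derivative + Polynomial.C (N : ℝ) * P).coeff p
      = P.derivative.coeff p + (((N : ℝ) - p) * P.coeff p) := by
    intro p
    have : (1 - X) * P.derivative + Polynomial.C (N : ℝ) * P
        = (P.derivative + Polynomial.C (N : ℝ) * P) - X * P.derivative := by ring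
    rw [this, Polynomial.coeff_sub, Polynomial.coeff_add, Polynomial.coeff_C_mul,
      coeff_X_mul_deriv]
    ring
  simp only [hRHS1, hRHS2]
  simp only [add_mul]
  rw [Finset.sum_add_distrib, Finset.sum_add_distrib]
  ring

def S1 (a k : ℕ) : Prop := ∀ x y : ℝ,
  Real.sqrt 2 ^ (a + k) * (He a ((x + y) / Real.sqrt 2) * He k ((x - y) / Real.sqrt 2))
    = ∑ p ∈ Finset.range (a + k + 1), (PP a k).coeff p * (He p x * He (a + k - p) y)

lemma sqrt2_ne : Real.sqrt 2 ≠ 0 := ne_of_gt (Real.sqrt_pos.mpr two_pos)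

lemma sqrt2_sq : Real.sqrt 2 ^ 2 = 2 := Real.sq_sqrt (by norm_num)

lemma PP_succ_left (a k : ℕ) : PP (a + 1) k = (1 + X) * PP a k := by
  unfold PP; rw [pow_succ]; ring

lemma stepA (a k : ℕ) (IH1 : S1 a k) (IH2 : S1 (a - 1) k) : S1 (a + 1) k := by
  intro x y
  set s := Real.sqrt 2 with hs
  set v := (x + y) / s with hv
  set w := (x - y) / s with hw
  have lhs_split : s ^ (a + 1 + k) * (He (a + 1) v * He k w)
      = (x + y) * (s ^ (a + k) * (He a v * He k w))
        - (a : ℝ) * (s ^ (a + 1 + k) * (He (a - 1) v * He k w)) := by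
    rw [He_succ a v]
    have h1 : s ^ (a + 1 + k) = s * s ^ (a + k) := by
      rw [show a + 1 + k = (a + k) + 1 by omega, pow_succ]; ring
    have h2 : s * v = x + y := by rw [hv, mul_div_cancel₀ _ sqrt2_ne]
    calc s ^ (a + 1 + k) * ((v * He a v - ↑a * He (a - 1) v) * He k w)
        = (s * v) * (s ^ (a + k) * (He a v * He k w))
          - (a : ℝ) * (s ^ (a + 1 + k) * (He (a - 1) v * He k w)) := by rw [h1]; ring
      _ = _ := by rw [h2]
  have hlow : (a : ℝ) * (s ^ (a + 1 + k) * (He (a - 1) v * He k w))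
      = ∑ p ∈ Finset.range (a + k), 2 * (a : ℝ) * (PP (a - 1) k).coeff p
          * (He p x * He (a + k - 1 - p) y) := by
    cases a with
    | zero => simp
    | succ b =>
      have IH2' := IH2 x y
      simp only [Nat.add_sub_cancel] at IH2'
      calc ((b + 1 : ℕ) : ℝ) * (s ^ (b + 1 + 1 + k) * (He (b + 1 - 1) v * He k w))
          = 2 * ((b + 1 : ℕ) : ℝ) * (s ^ (b + k) * (He b v * He k w)) := by
            simp only [Nat.add_sub_cancel]
            rw [show b + 1 + 1 + k = (b + k) + 2 by omega, pow_add, sqrt2_sq]; ring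
        _ = 2 * ((b + 1 : ℕ) : ℝ) * ∑ p ∈ Finset.range (b + k + 1),
              (PP b k).coeff p * (He p x * He (b + k - p) y) := by rw [IH2']
        _ = _ := by
            rw [Finset.mul_sum, show b + 1 + k = b + k + 1 by omega]
            refine Finset.sum_congr rfl fun p hp => ?_
            simp only [Nat.add_sub_cancel]
            ring
  have hcast : Polynomial.C (((a + k : ℕ)) : ℝ) * PP a k
      = Polynomial.C ((a : ℝ) + k) * PP a k := by push_cast; ring
  rw [lhs_split, IH1 x y, coreStep (a + k) (PP a k) (coeff_PP_zero (by omega)) x y]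
  have hkc : ∀ p : ℕ, ((1 - X) * (PP a k).derivative
        + Polynomial.C (((a + k : ℕ)) : ℝ) * PP a k).coeff p
      = 2 * (a : ℝ) * (PP (a - 1) k).coeff p := by
    intro p
    rw [hcast, keyPoly, Polynomial.coeff_C_mul]
  simp only [hkc]
  have goalR : ∑ p ∈ Finset.range (a + 1 + k + 1), (PP (a + 1) k).coeff p
      * (He p x * He (a + 1 + k - p) y)
      = ∑ p ∈ Finset.range (a + k + 2), ((1 + X) * PP a k).coeff p
        * (He p x * He (a + k + 1 - p) y) := by
    rw [show a + 1 + k + 1 = a + k + 2 by omega, ← PP_succ_left]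
    refine Finset.sum_congr rfl fun p hp => ?_
    rw [show a + 1 + k - p = a + k + 1 - p by omega]
  rw [goalR, hlow]
  ring

lemma base00 : S1 0 0 := by
  intro x y
  simp [PP, He_zero]

lemma allA0 (a : ℕ) : S1 a 0 := by
  induction a using Nat.strong_induction_on with
  | _ a ih =>
    match a with
    | 0 => exact base00
    | (b + 1) => exact stepA b 0 (ih b (by omega)) (ih (b - 1) (by omega))

lemma coeff_PP_left (k p : ℕ) : (PP k 0).coeff p = (k.choose p : ℝ) := by
  unfold PP
  simp [Polynomial.coeff_one_add_X_pow]

lemma coeff_PP_right (k p : ℕ) : (PP 0 k).coeff p = (-1 : ℝ) ^ (k - p) * (k.choose p : ℝ) := by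
  unfold PP
  have : (X - 1 : ℝ[X]) = X + Polynomial.C (-1) := by
    rw [map_neg, map_one]; ring
  rw [pow_zero, one_mul, this, Polynomial.coeff_X_add_C_pow]

lemma refl0 (k : ℕ) : S1 0 k := by
  intro x y
  have H := allA0 k x (-y)
  simp only [add_zero, ← sub_eq_add_neg, sub_neg_eq_add] at H
  rw [He_zero] at H ⊢
  simp only [zero_add, one_mul, mul_one] at H ⊢
  rw [H]
  refine Finset.sum_congr rfl fun p hp => ?_
  rw [He_neg, coeff_PP_left, coeff_PP_right]
  ring

lemma main1D (a k : ℕ) : S1 a k := by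
  induction a using Nat.strong_induction_on with
  | _ a ih =>
    match a with
    | 0 => exact refl0 k
    | (b + 1) => exact stepA b k (ih b (by omega)) (ih (b - 1) (by omega))

lemma two_rpow_eq (n : ℕ) : (2 : ℝ) ^ (-((n : ℝ) / 2)) = (Real.sqrt 2)⁻¹ ^ n := by
  have h2 : (0:ℝ) ≤ 2 := by norm_num
  have hs : Real.sqrt 2 = (2 : ℝ) ^ ((1:ℝ)/2) := Real.sqrt_eq_rpow 2
  rw [hs, ← Real.rpow_neg h2, ← Real.rpow_natCast ((2:ℝ) ^ (-((1:ℝ)/2))) n,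
    ← Real.rpow_mul h2]
  rw [show -((1:ℝ)/2) * (n:ℝ) = -((n:ℝ)/2) by ring]

lemma coeff_PP_explicit (a k p : ℕ) : (PP a k).coeff p
    = ∑ s ∈ Finset.range (p + 1),
        (a.choose s : ℝ) * ((-1 : ℝ) ^ (k - (p - s)) * (k.choose (p - s) : ℝ)) := by
  unfold PP
  rw [Polynomial.coeff_mul, Finset.Nat.sum_antidiagonal_eq_sum_range_succ_mk]
  refine Finset.sum_congr rfl fun s hs => ?_
  rw [Polynomial.coeff_one_add_X_pow]
  have : (X - 1 : ℝ[X]) = X + Polynomial.C (-1) := by rw [map_neg, map_one]; ring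
  rw [this, Polynomial.coeff_X_add_C_pow]

lemma aCoe_eq {p q a k : ℕ} (h : p + q = a + k) :
    aCoe p q a k = (Real.sqrt 2)⁻¹ ^ (a + k) * (PP a k).coeff p := by
  unfold aCoe
  rw [if_pos h]
  have hr : (2 : ℝ) ^ (-(((p : ℝ) + q) / 2)) = (Real.sqrt 2)⁻¹ ^ (a + k) := by
    rw [show ((p : ℝ) + q) = ((p + q : ℕ) : ℝ) by push_cast; ring, h, two_rpow_eq]
  rw [hr, coeff_PP_explicit]
  have hsub : Finset.Icc (p - k) (min p a) ⊆ Finset.range (p + 1) := by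
    intro s hs
    simp only [Finset.mem_Icc] at hs
    simp only [Finset.mem_range]
    omega
  have hzero : ∀ s ∈ Finset.range (p + 1), s ∉ Finset.Icc (p - k) (min p a) →
      (a.choose s : ℝ) * ((-1 : ℝ) ^ (k - (p - s)) * (k.choose (p - s) : ℝ)) = 0 := by
    intro s hs hns
    simp only [Finset.mem_range] at hs
    simp only [Finset.mem_Icc, not_and_or, not_le] at hns
    rcases hns with h1 | h2
    · have : k < p - s := by omega
      rw [Nat.choose_eq_zero_of_lt this]
      simp
    · have : a < s := by omega
      rw [Nat.choose_eq_zero_of_lt this]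
      simp
  rw [← Finset.sum_subset hsub hzero, Finset.mul_sum, Finset.mul_sum]
  refine Finset.sum_congr rfl fun s hs => ?_
  simp only [Finset.mem_Icc] at hs
  have hsp : s ≤ p := le_trans hs.2 (min_le_left _ _)
  have hsa : s ≤ a := le_trans hs.2 (min_le_right _ _)
  have hpsk : p - s ≤ k := by omega
  have hint : (q : ℤ) - a + s = ((k - (p - s) : ℕ) : ℤ) := by omega
  rw [hint, zpow_natCast, Int.toNat_natCast]
  have e1 : (a.factorial : ℝ) = (a.choose s : ℝ) * ((s.factorial : ℝ) * ((a - s).factorial : ℝ)) := by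
    rw [← Nat.choose_mul_factorial_mul_factorial hsa]
    push_cast
    ring
  have e2 : (k.factorial : ℝ) = (k.choose (p - s) : ℝ)
      * (((p - s).factorial : ℝ) * ((k - (p - s)).factorial : ℝ)) := by
    rw [← Nat.choose_mul_factorial_mul_factorial hpsk]
    push_cast
    ring
  have hden : ((s.factorial * (a - s).factorial * (p - s).factorial
      * (k - (p - s)).factorial : ℕ) : ℝ) ≠ 0 := by
    positivity
  have key : ((a.factorial : ℝ) * (k.factorial : ℝ) * (-1 : ℝ) ^ (k - (p - s)))
      / ((s.factorial * (a - s).factorial * (p - s).factorial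
          * (k - (p - s)).factorial : ℕ) : ℝ)
      = (a.choose s : ℝ) * ((-1 : ℝ) ^ (k - (p - s)) * (k.choose (p - s) : ℝ)) := by
    rw [div_eq_iff hden]
    push_cast
    linear_combination ((-1:ℝ)^(k-(p-s)) * (k.factorial:ℝ)) * e1
      + ((-1:ℝ)^(k-(p-s)) * (a.choose s:ℝ) * (s.factorial:ℝ) * ((a-s).factorial:ℝ)) * e2
  linear_combination ((Real.sqrt 2)⁻¹ ^ (a + k)) * key

def gss (t : ℝ) : ℝ := Real.exp (-(t ^ 2 / 2))

lemma gss_contDiff : ContDiff ℝ ⊤ gss := by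
  apply Real.contDiff_exp.comp
  exact ((contDiff_id.pow 2).div_const 2).neg

lemma gss_ne (t : ℝ) : gss t ≠ 0 := (Real.exp_pos _).ne'

lemma itc (n : ℕ) (c : ℝ) {f : ℝ → ℝ} (hf : ContDiff ℝ ⊤ f) (x : ℝ) :
    iteratedDeriv n (fun z => c * f z) x = c * iteratedDeriv n f x := by
  rw [← iteratedDerivWithin_univ, ← iteratedDerivWithin_univ]
  exact iteratedDerivWithin_const_mul (Set.mem_univ x) uniqueDiffOn_univ c
    (hf.contDiffWithinAt.of_le le_top)

lemma gauss_itd (n : ℕ) (t : ℝ) :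
    iteratedDeriv n gss t = (-1 : ℝ) ^ n * He n t * gss t := by
  rw [iteratedDeriv_eq_iterate]
  exact Polynomial.deriv_gaussian_eq_hermite_mul_gaussian n t

lemma Mxw_factor (x1 x2 x3 : ℝ) :
    Mxw ![x1, x2, x3] = (2 * π) ^ (-(3 : ℝ) / 2) * (gss x1 * gss x2 * gss x3) := by
  unfold Mxw gss
  rw [Fin.sum_univ_three]
  simp only [Matrix.cons_val_zero, Matrix.cons_val_one, Matrix.head_cons,
    Matrix.cons_val_two, Matrix.tail_cons]
  rw [← Real.exp_add, ← Real.exp_add]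
  congr 1
  ring

lemma Mxw_eq (v : V3) : Mxw v = (2 * π) ^ (-(3 : ℝ) / 2) * (gss (v 0) * gss (v 1) * gss (v 2)) := by
  unfold Mxw gss
  rw [Fin.sum_univ_three, ← Real.exp_add, ← Real.exp_add]
  congr 1
  ring

lemma Mxw_ne (v : V3) : Mxw v ≠ 0 := by
  unfold Mxw
  positivity

lemma Herm_prod (α : Fin 3 → ℕ) (v : V3) : Herm α v = ∏ i, He (α i) (v i) := by
  unfold Herm
  set C0 : ℝ := (2 * π) ^ (-(3 : ℝ) / 2) with hC0
  have d3 : ∀ x1 x2 : ℝ, iteratedDeriv (α 2) (fun x3 => Mxw ![x1, x2, x3]) (v 2)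
      = (C0 * gss x1 * gss x2) * ((-1 : ℝ) ^ (α 2) * He (α 2) (v 2) * gss (v 2)) := by
    intro x1 x2
    have : (fun x3 => Mxw ![x1, x2, x3]) = fun x3 => (C0 * gss x1 * gss x2) * gss x3 := by
      funext x3
      rw [Mxw_factor]
      ring
    rw [this, itc _ _ gss_contDiff, gauss_itd]
  have d2 : ∀ x1 : ℝ,
      iteratedDeriv (α 1) (fun x2 =>
        iteratedDeriv (α 2) (fun x3 => Mxw ![x1, x2, x3]) (v 2)) (v 1)
      = (C0 * gss x1 * ((-1 : ℝ) ^ (α 2) * He (α 2) (v 2) * gss (v 2)))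
        * ((-1 : ℝ) ^ (α 1) * He (α 1) (v 1) * gss (v 1)) := by
    intro x1
    have : (fun x2 => iteratedDeriv (α 2) (fun x3 => Mxw ![x1, x2, x3]) (v 2))
        = fun x2 => (C0 * gss x1 * ((-1 : ℝ) ^ (α 2) * He (α 2) (v 2) * gss (v 2))) * gss x2 := by
      funext x2
      rw [d3]
      ring
    rw [this, itc _ _ gss_contDiff, gauss_itd]
  have d1 : iteratedDeriv (α 0) (fun x1 =>
      iteratedDeriv (α 1) (fun x2 =>
        iteratedDeriv (α 2) (fun x3 => Mxw ![x1, x2, x3]) (v 2)) (v 1)) (v 0)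
      = (C0 * ((-1 : ℝ) ^ (α 2) * He (α 2) (v 2) * gss (v 2))
          * ((-1 : ℝ) ^ (α 1) * He (α 1) (v 1) * gss (v 1)))
        * ((-1 : ℝ) ^ (α 0) * He (α 0) (v 0) * gss (v 0)) := by
    have : (fun x1 => iteratedDeriv (α 1) (fun x2 =>
        iteratedDeriv (α 2) (fun x3 => Mxw ![x1, x2, x3]) (v 2)) (v 1))
        = fun x1 => (C0 * ((-1 : ℝ) ^ (α 2) * He (α 2) (v 2) * gss (v 2))
          * ((-1 : ℝ) ^ (α 1) * He (α 1) (v 1) * gss (v 1))) * gss x1 := by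
      funext x1
      rw [d2]
      ring
    rw [this, itc _ _ gss_contDiff, gauss_itd]
  rw [d1, Fin.prod_univ_three, Mxw_eq]
  unfold degIdx
  have hC0ne : C0 ≠ 0 := by
    rw [hC0]; positivity
  field_simp [gss_ne]
  rw [pow_add, pow_add, hC0]
  ring_nf
  simp only [pow_mul', neg_one_sq, one_pow, one_mul, mul_one]

lemma oneD (a k : ℕ) (hh gg : ℝ) :
    He a (hh + 2⁻¹ * gg) * He k (hh - 2⁻¹ * gg)
      = ∑ p ∈ Finset.range (a + k + 1),
          aCoe p (a + k - p) a k * (He p (Real.sqrt 2 * hh)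
            * He (a + k - p) ((Real.sqrt 2)⁻¹ * gg)) := by
  set x := Real.sqrt 2 * hh with hx
  set y := (Real.sqrt 2)⁻¹ * gg with hy
  have h2 : Real.sqrt 2 * Real.sqrt 2 = 2 := Real.mul_self_sqrt (by norm_num)
  have e1 : (x + y) / Real.sqrt 2 = hh + 2⁻¹ * gg := by
    rw [hx, hy, div_eq_iff sqrt2_ne]
    field_simp
    linear_combination (-gg) * h2
  have e2 : (x - y) / Real.sqrt 2 = hh - 2⁻¹ * gg := by
    rw [hx, hy, div_eq_iff sqrt2_ne]
    field_simp
    linear_combination gg * h2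
  have main := main1D a k x y
  rw [e1, e2] at main
  have hcancel : ((Real.sqrt 2)⁻¹) ^ (a + k) * (Real.sqrt 2) ^ (a + k) = 1 := by
    rw [← mul_pow, inv_mul_cancel₀ sqrt2_ne, one_pow]
  calc He a (hh + 2⁻¹ * gg) * He k (hh - 2⁻¹ * gg)
      = ((Real.sqrt 2)⁻¹) ^ (a + k) * ((Real.sqrt 2) ^ (a + k)
          * (He a (hh + 2⁻¹ * gg) * He k (hh - 2⁻¹ * gg))) := by
        rw [← mul_assoc, hcancel, one_mul]
    _ = ((Real.sqrt 2)⁻¹) ^ (a + k) * ∑ p ∈ Finset.range (a + k + 1),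
          (PP a k).coeff p * (He p x * He (a + k - p) y) := by rw [main]
    _ = _ := by
        rw [Finset.mul_sum]
        refine Finset.sum_congr rfl fun p hp => ?_
        have hp' : p ≤ a + k := Nat.lt_succ_iff.mp (Finset.mem_range.mp hp)
        rw [aCoe_eq (show p + (a + k - p) = a + k by omega)]
        ring

/-- product formula for Hermite polynomials under the change of
variables v = h + g/2, w = h - g/2. -/
theorem herm_product_formula (h g : V3) (α κ : Fin 3 → ℕ) :
    Herm α (h + (2 : ℝ)⁻¹ • g) * Herm κ (h - (2 : ℝ)⁻¹ • g) =
      ∑ x ∈ idxPairs (α + κ),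
        aMulti x.1 x.2 α κ * Herm x.1 (Real.sqrt 2 • h) *
          Herm x.2 ((Real.sqrt 2)⁻¹ • g) := by
  simp only [Herm_prod]
  set σ : Fin 3 → ℕ := α + κ with hσ
  have hL : (∏ i, He (α i) ((h + (2 : ℝ)⁻¹ • g) i)) * ∏ i, He (κ i) ((h - (2 : ℝ)⁻¹ • g) i)
      = ∏ i, (He (α i) (h i + 2⁻¹ * g i) * He (κ i) (h i - 2⁻¹ * g i)) := by
    rw [← Finset.prod_mul_distrib]
    refine Finset.prod_congr rfl fun i _ => ?_
    simp
  rw [hL]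
  have hstep : ∀ i : Fin 3, He (α i) (h i + 2⁻¹ * g i) * He (κ i) (h i - 2⁻¹ * g i)
      = ∑ p ∈ Finset.range (σ i + 1), aCoe p (σ i - p) (α i) (κ i)
          * (He p (Real.sqrt 2 * h i) * He (σ i - p) ((Real.sqrt 2)⁻¹ * g i)) := by
    intro i
    have hσi : σ i = α i + κ i := rfl
    rw [hσi]
    exact oneD (α i) (κ i) (h i) (g i)
  rw [Finset.prod_congr rfl fun i _ => hstep i, Finset.prod_univ_sum]
  refine Finset.sum_nbij' (fun f => (f, σ - f)) (fun x => x.1) ?_ ?_ ?_ ?_ ?_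
  · intro f hf
    rw [Fintype.mem_piFinset] at hf
    unfold idxPairs
    rw [Finset.mem_filter, Finset.mem_product]
    refine ⟨⟨by rw [Fintype.mem_piFinset]; exact hf, ?_⟩, ?_⟩
    · rw [Fintype.mem_piFinset]
      intro i
      have := hf i
      rw [Finset.mem_range] at this ⊢
      simp only [Pi.sub_apply]
      omega
    · funext i
      have := hf i
      rw [Finset.mem_range] at this
      simp only [Pi.add_apply, Pi.sub_apply]
      omega
  · intro x hx
    unfold idxPairs at hx
    rw [Finset.mem_filter, Finset.mem_product] at hx
    exact hx.1.1
  · intro f _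
    rfl
  · intro x hx
    unfold idxPairs at hx
    rw [Finset.mem_filter, Finset.mem_product] at hx
    obtain ⟨⟨h1, h2⟩, h3⟩ := hx
    have : σ - x.1 = x.2 := by
      funext i
      have := congrFun h3 i
      simp only [Pi.add_apply] at this
      simp only [Pi.sub_apply]
      omega
    rw [Prod.ext_iff]
    exact ⟨rfl, this⟩
  · intro f hf
    rw [Fintype.mem_piFinset] at hf
    simp only
    unfold aMulti
    rw [Finset.prod_congr rfl (fun i (_ : i ∈ Finset.univ) =>
      (rfl : aCoe (f i) (σ i - f i) (α i) (κ i)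
          * (He (f i) (Real.sqrt 2 * h i) * He (σ i - f i) ((Real.sqrt 2)⁻¹ * g i))
        = aCoe (f i) (σ i - f i) (α i) (κ i)
          * (He (f i) (Real.sqrt 2 * h i) * He (σ i - f i) ((Real.sqrt 2)⁻¹ * g i)))),
      Finset.prod_mul_distrib, Finset.prod_mul_distrib]
    have ha : ∏ i, aCoe (f i) (σ i - f i) (α i) (κ i)
        = ∏ i, aCoe (f i) ((σ - f) i) (α i) (κ i) := by
      refine Finset.prod_congr rfl fun i _ => ?_
      simp only [Pi.sub_apply]
    have hb : ∏ i, He (f i) (Real.sqrt 2 * h i) = ∏ i, He (f i) ((Real.sqrt 2 • h) i) := by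
      refine Finset.prod_congr rfl fun i _ => ?_
      simp
    have hc : ∏ i, He (σ i - f i) ((Real.sqrt 2)⁻¹ * g i)
        = ∏ i, He ((σ - f) i) (((Real.sqrt 2)⁻¹ • g) i) := by
      refine Finset.prod_congr rfl fun i _ => ?_
      simp [Pi.sub_apply]
    rw [ha, hb, hc]
    ring
end
end

section
/- Let l, l₁, l₂ ≥ 0 be integers and m ∈ {−l,…,l}, m₁ ∈ {−l₁,…,l₁}, m₂ ∈ {−l₂,…,l₂}. If m ≠ m₁ + m₂, or l ∉ [|l₁−l₂|, l₁+l₂], then ∫_{S²} Y_{l₁}^{m₁}(n) Y_{l₂}^{m₂}(n) conj(Y_{l}^{m}(n)) dn = 0. -/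
open MeasureTheory Real
open scoped BigOperators Classical

noncomputable section

section AuxTriple
open Polynomial

-- A
lemma iteratedDeriv_polyeval (p : Polynomial ℝ) (n : ℕ) :
    iteratedDeriv n (fun y => p.eval y) = fun y => (Polynomial.derivative^[n] p).eval y := by
  induction n with
  | zero => simp
  | succ n ih =>
    rw [iteratedDeriv_succ, ih, Function.iterate_succ_apply']
    funext y
    exact Polynomial.deriv _

-- C step
lemma dvd_derivative_step {c : ℝ} {k : ℕ} {p : Polynomial ℝ}
    (h : (X - C c) ^ (k+1) ∣ p) : (X - C c) ^ k ∣ Polynomial.derivative p := by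
  obtain ⟨q, rfl⟩ := h
  have e : Polynomial.derivative ((X - C c) ^ (k+1) * q) =
      (X - C c)^k * (C ((k:ℝ)+1) * q + (X - C c) * Polynomial.derivative q) := by
    rw [Polynomial.derivative_mul, Polynomial.derivative_pow, Polynomial.derivative_X_sub_C,
      Nat.add_sub_cancel]
    push_cast
    ring
  rw [e]
  exact Dvd.intro _ rfl

lemma dvd_iterate_derivative {c : ℝ} {k j : ℕ} {p : Polynomial ℝ}
    (h : (X - C c) ^ k ∣ p) : (X - C c) ^ (k - j) ∣ Polynomial.derivative^[j] p := by
  induction j generalizing k p with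
  | zero => simpa using h
  | succ j ih =>
    rw [Function.iterate_succ_apply']
    rcases Nat.eq_zero_or_pos (k - j) with h0 | hpos
    · have : k - (j+1) = 0 := by omega
      simp [this]
    · have := dvd_derivative_step (c := c) (k := k - j - 1) (p := Polynomial.derivative^[j] p)
        (by rw [Nat.sub_add_cancel hpos]; exact ih h)
      have e : k - (j+1) = k - j - 1 := by omega
      rw [e]
      exact this

lemma pow_dvd_P {c : ℝ} (hc : c = 1 ∨ c = -1) (l : ℕ) :
    (X - C c) ^ l ∣ ((X : Polynomial ℝ) ^ 2 - 1) ^ l := by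
  refine pow_dvd_pow_of_dvd ?_ l
  rw [Polynomial.dvd_iff_isRoot]
  rcases hc with rfl | rfl <;> simp [Polynomial.IsRoot]

lemma eval_iterder_P {c : ℝ} (hc : c = 1 ∨ c = -1) (l j : ℕ) (hj : j < l) :
    (Polynomial.derivative^[j] (((X : Polynomial ℝ) ^ 2 - 1) ^ l)).eval c = 0 := by
  obtain ⟨q, hq⟩ := dvd_iterate_derivative (c := c) (j := j) (pow_dvd_P hc l)
  rw [hq]
  simp [zero_pow (show l - j ≠ 0 by omega)]

lemma ibp_poly (n : ℕ) (f g : Polynomial ℝ)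
    (hb : ∀ j < n,
      (Polynomial.derivative^[j] f).eval 1 * (Polynomial.derivative^[n-1-j] g).eval 1 = 0 ∧
      (Polynomial.derivative^[j] f).eval (-1) * (Polynomial.derivative^[n-1-j] g).eval (-1) = 0)
    (hf : Polynomial.derivative^[n] f = 0) :
    ∫ x in (-1:ℝ)..1, f.eval x * (Polynomial.derivative^[n] g).eval x = 0 := by
  induction n generalizing f with
  | zero =>
    simp only [Function.iterate_zero_apply] at hf
    simp [hf]
  | succ n ih =>
    have key := intervalIntegral.integral_mul_deriv_eq_deriv_mul (a := (-1:ℝ)) (b := 1)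
      (u := fun x => f.eval x) (u' := fun x => f.derivative.eval x)
      (v := fun x => (Polynomial.derivative^[n] g).eval x)
      (v' := fun x => (Polynomial.derivative^[n+1] g).eval x)
      (fun x _ => f.hasDerivAt x)
      (fun x _ => by
        have := (Polynomial.derivative^[n] g).hasDerivAt x
        rwa [← Function.iterate_succ_apply' Polynomial.derivative] at this)
      (f.derivative.continuous.intervalIntegrable _ _)
      ((Polynomial.derivative^[n+1] g).continuous.intervalIntegrable _ _)
    have hb0 := hb 0 (by omega)
    simp only [Function.iterate_zero_apply, Nat.add_sub_cancel, Nat.sub_zero] at hb0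
    rw [key, hb0.1, hb0.2]
    have ihres := ih f.derivative
      (fun j hj => by
        have := hb (j+1) (by omega)
        constructor
        · have e := this.1
          rwa [Function.iterate_succ_apply Polynomial.derivative,
            show n + 1 - 1 - (j+1) = n - 1 - j by omega] at e
        · have e := this.2
          rwa [Function.iterate_succ_apply Polynomial.derivative,
            show n + 1 - 1 - (j+1) = n - 1 - j by omega] at e)
      (by rwa [Function.iterate_succ_apply Polynomial.derivative] at hf)
    rw [ihres]
    ring

lemma assocLegendre_eq (l : ℕ) (m : ℤ) (x : ℝ) :
    assocLegendre l m x = ((-1 : ℝ) ^ m * (1 - x ^ 2) ^ ((m : ℝ) / 2) / (2 ^ l * l.factorial)) *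
      (Polynomial.derivative^[((l : ℤ) + m).toNat] (((X : Polynomial ℝ) ^ 2 - 1) ^ l)).eval x := by
  unfold assocLegendre
  congr 1
  have h : (fun y : ℝ => (y ^ 2 - 1) ^ l) = fun y => ((((X : Polynomial ℝ) ^ 2 - 1)) ^ l).eval y := by
    funext y; simp
  rw [h, iteratedDeriv_polyeval]

open Real in
lemma cos_subst (p : Polynomial ℝ) :
    ∫ θ in (0:ℝ)..π, Real.sin θ * p.eval (Real.cos θ) = ∫ x in (-1:ℝ)..1, p.eval x := by
  have h := intervalIntegral.integral_comp_smul_deriv (a := (0:ℝ)) (b := π)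
    (f := Real.cos) (f' := fun θ => -Real.sin θ) (g := fun x => p.eval x)
    (fun θ _ => Real.hasDerivAt_cos θ) (Real.continuous_sin.neg).continuousOn p.continuous
  rw [Real.cos_zero, Real.cos_pi] at h
  rw [intervalIntegral.integral_symm (-1:ℝ) 1] at h
  simp only [smul_eq_mul, neg_mul] at h
  rw [intervalIntegral.integral_neg] at h
  have := neg_injective h
  simpa [Function.comp] using this

lemma X_sq_sub_one_ne : ((X : Polynomial ℝ) ^ 2 - 1) ≠ 0 := by
  intro h
  have := congrArg (Polynomial.eval 2) h
  norm_num at this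

lemma natDegree_X_sq_sub_one : ((X : Polynomial ℝ) ^ 2 - 1).natDegree = 2 := by
  rw [show ((X : Polynomial ℝ) ^ 2 - 1) = X ^ 2 - C 1 by rw [Polynomial.C_1],
    Polynomial.natDegree_X_pow_sub_C]

lemma dvd_q_aux (l : ℕ) (m : ℤ) (h : m.natAbs ≤ l) :
    ((X : Polynomial ℝ) ^ 2 - 1) ^ (-m).toNat ∣
      Polynomial.derivative^[((l : ℤ) + m).toNat] (((X : Polynomial ℝ) ^ 2 - 1) ^ l) := by
  have key : ∀ c : ℝ, c = 1 ∨ c = -1 →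
      (X - C c) ^ ((-m).toNat) ∣
        Polynomial.derivative^[((l : ℤ) + m).toNat] (((X : Polynomial ℝ) ^ 2 - 1) ^ l) := by
    intro c hc
    have hd := dvd_iterate_derivative (j := ((l : ℤ) + m).toNat) (pow_dvd_P hc l)
    rwa [show l - ((l : ℤ) + m).toNat = (-m).toNat by omega] at hd
  have hco : IsCoprime ((X - C (1:ℝ)) ^ (-m).toNat) ((X - C (-1:ℝ)) ^ (-m).toNat) := by
    refine IsCoprime.pow ?_
    exact Polynomial.isCoprime_X_sub_C_of_isUnit_sub (by norm_num)
  have hmul := hco.mul_dvd (key 1 (Or.inl rfl)) (key (-1) (Or.inr rfl))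
  rwa [show ((X - C (1:ℝ)) ^ (-m).toNat * (X - C (-1:ℝ)) ^ (-m).toNat)
      = ((X : Polynomial ℝ) ^ 2 - 1) ^ (-m).toNat by
    rw [← mul_pow]; congr 1; simp [Polynomial.C_neg]; ring] at hmul

open Real in
lemma core_theta (l1 l2 l3 : ℕ) (m1 m2 m3 : ℤ)
    (h1 : m1.natAbs ≤ l1) (h2 : m2.natAbs ≤ l2) (h3 : m3.natAbs ≤ l3)
    (hsum : m3.natAbs ≤ m1.natAbs + m2.natAbs)
    (hpar : (m1 + m2 + m3) % 2 = 0)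
    (hl : l1 + l2 < l3) :
    ∫ θ in (0:ℝ)..π, Real.sin θ *
      (assocLegendre l1 m1 (Real.cos θ) * assocLegendre l2 m2 (Real.cos θ) *
        assocLegendre l3 m3 (Real.cos θ)) = 0 := by
  obtain ⟨p1, hp1⟩ := dvd_q_aux l1 m1 h1
  obtain ⟨p2, hp2⟩ := dvd_q_aux l2 m2 h2
  by_cases hz1 : Polynomial.derivative^[((l1 : ℤ) + m1).toNat] (((X : Polynomial ℝ) ^ 2 - 1) ^ l1) = 0
  · have hzero : ∀ x : ℝ, assocLegendre l1 m1 x = 0 := by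
      intro x; rw [assocLegendre_eq, hz1]; simp
    simp [hzero]
  by_cases hz2 : Polynomial.derivative^[((l2 : ℤ) + m2).toNat] (((X : Polynomial ℝ) ^ 2 - 1) ^ l2) = 0
  · have hzero : ∀ x : ℝ, assocLegendre l2 m2 x = 0 := by
      intro x; rw [assocLegendre_eq, hz2]; simp
    simp [hzero]
  obtain ⟨w, hw⟩ : ∃ w : ℕ, (w : ℤ) * 2 = (m1.natAbs : ℤ) + m2.natAbs + m3 :=
    ⟨(((m1.natAbs : ℤ) + m2.natAbs + m3).toNat) / 2, by omega⟩
  set q3 : Polynomial ℝ :=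
    Polynomial.derivative^[((l3 : ℤ) + m3).toNat] (((X : Polynomial ℝ) ^ 2 - 1) ^ l3) with hq3
  set S : Polynomial ℝ := ((1 : Polynomial ℝ) - X ^ 2) ^ w * p1 * p2 with hS
  set cst : ℝ := ((-1 : ℝ) ^ m1 / (2 ^ l1 * l1.factorial)) *
      ((-1 : ℝ) ^ m2 / (2 ^ l2 * l2.factorial)) *
      ((-1 : ℝ) ^ m3 / (2 ^ l3 * l3.factorial)) *
      ((-1 : ℝ) ^ ((-m1).toNat) * (-1 : ℝ) ^ ((-m2).toNat)) with hcst
  -- pointwise identity on (-1,1)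
  have hptw : ∀ x : ℝ, -1 < x → x < 1 →
      assocLegendre l1 m1 x * assocLegendre l2 m2 x * assocLegendre l3 m3 x
        = cst * ((S * q3).eval x) := by
    intro x hx1 hx2
    have ht : (0:ℝ) < 1 - x ^ 2 := by nlinarith
    have hq1e : (Polynomial.derivative^[((l1 : ℤ) + m1).toNat]
        (((X : Polynomial ℝ) ^ 2 - 1) ^ l1)).eval x
        = (-1 : ℝ) ^ ((-m1).toNat) * (1 - x ^ 2) ^ ((-m1).toNat) * p1.eval x := by
      rw [hp1]
      simp only [Polynomial.eval_mul, Polynomial.eval_pow, Polynomial.eval_sub,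
        Polynomial.eval_one, Polynomial.eval_X]
      rw [show (x ^ 2 - 1) = -(1 - x ^ 2) by ring, neg_pow]
    have hq2e : (Polynomial.derivative^[((l2 : ℤ) + m2).toNat]
        (((X : Polynomial ℝ) ^ 2 - 1) ^ l2)).eval x
        = (-1 : ℝ) ^ ((-m2).toNat) * (1 - x ^ 2) ^ ((-m2).toNat) * p2.eval x := by
      rw [hp2]
      simp only [Polynomial.eval_mul, Polynomial.eval_pow, Polynomial.eval_sub,
        Polynomial.eval_one, Polynomial.eval_X]
      rw [show (x ^ 2 - 1) = -(1 - x ^ 2) by ring, neg_pow]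
    have hrpow : (1 - x ^ 2) ^ ((m1 : ℝ) / 2) * (1 - x ^ 2) ^ ((-m1).toNat) *
        ((1 - x ^ 2) ^ ((m2 : ℝ) / 2) * (1 - x ^ 2) ^ ((-m2).toNat)) *
        (1 - x ^ 2) ^ ((m3 : ℝ) / 2) = (1 - x ^ 2) ^ w := by
      rw [← Real.rpow_natCast (1 - x ^ 2) ((-m1).toNat),
        ← Real.rpow_natCast (1 - x ^ 2) ((-m2).toNat),
        ← Real.rpow_natCast (1 - x ^ 2) w,
        ← Real.rpow_add ht, ← Real.rpow_add ht, ← Real.rpow_add ht, ← Real.rpow_add ht]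
      congr 1
      have e1 : 2 * (((-m1).toNat : ℤ)) = (m1.natAbs : ℤ) - m1 := by omega
      have e2 : 2 * (((-m2).toNat : ℤ)) = (m2.natAbs : ℤ) - m2 := by omega
      have e1' := congrArg (fun z : ℤ => (z : ℝ)) e1
      have e2' := congrArg (fun z : ℤ => (z : ℝ)) e2
      have hw' := congrArg (fun z : ℤ => (z : ℝ)) hw
      push_cast at e1' e2' hw'
      linarith
    rw [assocLegendre_eq, assocLegendre_eq, assocLegendre_eq, hq1e, hq2e]
    rw [hS, hcst]
    simp only [Polynomial.eval_mul, Polynomial.eval_pow, Polynomial.eval_sub,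
      Polynomial.eval_one, Polynomial.eval_X]
    rw [← hrpow]
    ring
  have heq : Set.EqOn
      (fun θ => Real.sin θ * (assocLegendre l1 m1 (Real.cos θ) *
        assocLegendre l2 m2 (Real.cos θ) * assocLegendre l3 m3 (Real.cos θ)))
      (fun θ => Real.sin θ * (cst * ((S * q3).eval (Real.cos θ)))) (Set.uIcc 0 π) := by
    intro θ hθ
    rw [Set.uIcc_of_le Real.pi_pos.le] at hθ
    simp only
    rcases eq_or_lt_of_le hθ.1 with h0 | h0
    · rw [← h0]; simp
    rcases eq_or_lt_of_le hθ.2 with hpi | hpi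
    · rw [hpi]; simp
    have hc1 : Real.cos θ < 1 := by
      have := Real.strictAntiOn_cos (Set.mem_Icc.mpr ⟨le_rfl, Real.pi_pos.le⟩)
        (Set.mem_Icc.mpr ⟨hθ.1, hθ.2⟩) h0
      simpa using this
    have hc2 : -1 < Real.cos θ := by
      have := Real.strictAntiOn_cos (Set.mem_Icc.mpr ⟨hθ.1, hθ.2⟩)
        (Set.mem_Icc.mpr ⟨Real.pi_pos.le, le_rfl⟩) hpi
      simpa using this
    rw [hptw _ hc2 hc1]
  rw [intervalIntegral.integral_congr heq]
  have hpull : (fun θ => Real.sin θ * (cst * ((S * q3).eval (Real.cos θ))))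
      = fun θ => cst * (Real.sin θ * ((S * q3).eval (Real.cos θ))) := by funext θ; ring
  rw [hpull, intervalIntegral.integral_const_mul, cos_subst]
  have hev : ∫ x in (-1:ℝ)..1, (S * q3).eval x = ∫ x in (-1:ℝ)..1, S.eval x * q3.eval x := by
    simp [Polynomial.eval_mul]
  rw [hev]
  have hibp : ∫ x in (-1:ℝ)..1, S.eval x * q3.eval x = 0 := by
    rw [hq3]
    apply ibp_poly
    · intro j hj
      by_cases hjw : j < w
      · have hz : ∀ c : ℝ, c = 1 ∨ c = -1 → (Polynomial.derivative^[j] S).eval c = 0 := by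
          intro c hc
          have hbase : (X - C c) ∣ ((1 : Polynomial ℝ) - X ^ 2) := by
            rw [Polynomial.dvd_iff_isRoot]
            rcases hc with rfl | rfl <;> simp [Polynomial.IsRoot]
          have hdS : (X - C c) ^ w ∣ S := by
            rw [hS]
            exact Dvd.dvd.mul_right (Dvd.dvd.mul_right (pow_dvd_pow_of_dvd hbase w) _) _
          obtain ⟨u, hu⟩ := dvd_iterate_derivative (j := j) hdS
          rw [hu]
          simp [zero_pow (show w - j ≠ 0 by omega)]
        constructor
        · rw [hz 1 (Or.inl rfl)]; ring
        · rw [hz (-1) (Or.inr rfl)]; ring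
      · have hlt : ((l3:ℤ)+m3).toNat - 1 - j < l3 := by omega
        constructor
        · rw [eval_iterder_P (Or.inl rfl) l3 _ hlt]; ring
        · rw [eval_iterder_P (Or.inr rfl) l3 _ hlt]; ring
    · apply Polynomial.iterate_derivative_eq_zero
      have hp1ne : p1 ≠ 0 := by rintro rfl; rw [mul_zero] at hp1; exact hz1 hp1
      have hp2ne : p2 ≠ 0 := by rintro rfl; rw [mul_zero] at hp2; exact hz2 hp2
      have hqd1 : (Polynomial.derivative^[((l1:ℤ)+m1).toNat]
          (((X:Polynomial ℝ)^2-1)^l1)).natDegree ≤ l1 * 2 - ((l1:ℤ)+m1).toNat := by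
        have h := Polynomial.natDegree_iterate_derivative
          (((X:Polynomial ℝ)^2-1)^l1) (((l1:ℤ)+m1).toNat)
        rwa [Polynomial.natDegree_pow, natDegree_X_sq_sub_one] at h
      have hqd2 : (Polynomial.derivative^[((l2:ℤ)+m2).toNat]
          (((X:Polynomial ℝ)^2-1)^l2)).natDegree ≤ l2 * 2 - ((l2:ℤ)+m2).toNat := by
        have h := Polynomial.natDegree_iterate_derivative
          (((X:Polynomial ℝ)^2-1)^l2) (((l2:ℤ)+m2).toNat)
        rwa [Polynomial.natDegree_pow, natDegree_X_sq_sub_one] at h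
      have hmul1 : (Polynomial.derivative^[((l1:ℤ)+m1).toNat]
          (((X:Polynomial ℝ)^2-1)^l1)).natDegree = (-m1).toNat * 2 + p1.natDegree := by
        rw [hp1, Polynomial.natDegree_mul (pow_ne_zero _ X_sq_sub_one_ne) hp1ne,
          Polynomial.natDegree_pow, natDegree_X_sq_sub_one]
      have hmul2 : (Polynomial.derivative^[((l2:ℤ)+m2).toNat]
          (((X:Polynomial ℝ)^2-1)^l2)).natDegree = (-m2).toNat * 2 + p2.natDegree := by
        rw [hp2, Polynomial.natDegree_mul (pow_ne_zero _ X_sq_sub_one_ne) hp2ne,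
          Polynomial.natDegree_pow, natDegree_X_sq_sub_one]
      have hdeg12 : ((1:Polynomial ℝ) - X^2).natDegree = 2 := by
        rw [show ((1:Polynomial ℝ) - X^2) = -((X:Polynomial ℝ)^2 - C 1) by
          rw [Polynomial.C_1]; ring, Polynomial.natDegree_neg, Polynomial.natDegree_X_pow_sub_C]
      have hSdeg : S.natDegree ≤ w * 2 + p1.natDegree + p2.natDegree := by
        rw [hS]
        have b1 := Polynomial.natDegree_mul_le
          (p := ((1:Polynomial ℝ) - X^2)^w * p1) (q := p2)
        have b2 := Polynomial.natDegree_mul_le (p := ((1:Polynomial ℝ) - X^2)^w) (q := p1)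
        have b3 : (((1:Polynomial ℝ) - X^2)^w).natDegree = w * 2 := by
          rw [Polynomial.natDegree_pow, hdeg12]
        omega
      omega
  rw [hibp, mul_zero]

open Real Complex in
lemma int_exp_zpow (K : ℤ) :
    ∫ φ in (0:ℝ)..(2*π), Complex.exp (φ * Complex.I) ^ K
      = if K = 0 then (2*π : ℂ) else 0 := by
  have hfun : ∀ φ : ℝ, Complex.exp (φ * Complex.I) ^ K
      = Complex.exp ((K * Complex.I) * φ) := by
    intro φ
    rw [← Complex.exp_int_mul]
    ring_nf
  rcases eq_or_ne K 0 with rfl | hK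
  · simp
  · simp only [hfun, if_neg hK]
    rw [integral_exp_mul_complex (by simp [Complex.ext_iff, hK] : (K * Complex.I : ℂ) ≠ 0)]
    have h2 : Complex.exp ((K * Complex.I) * (2*π : ℝ)) = 1 := by
      rw [show ((K : ℂ) * Complex.I) * (2*π : ℝ) = K * (2 * π * Complex.I) by push_cast; ring]
      exact Complex.exp_int_mul_two_pi_mul_I K
    rw [h2]
    simp

open Real Complex in
lemma exp_arg_eq (r : ℝ) (hr : 0 < r) (φ : ℝ) (m : ℤ) :
    Complex.exp (Complex.I * m * (Complex.arg ((r * Real.cos φ : ℝ) + (r * Real.sin φ : ℝ) * Complex.I) : ℝ))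
      = Complex.exp (φ * Complex.I) ^ m := by
  set z : ℂ := (r * Real.cos φ : ℝ) + (r * Real.sin φ : ℝ) * Complex.I with hz
  have hzeq : z = r * Complex.exp (φ * Complex.I) := by
    rw [hz, Complex.exp_mul_I]
    push_cast
    ring
  have habs : ‖z‖ = r := by
    rw [hzeq]
    simp [abs_of_pos hr]
  have harg : Complex.exp ((Complex.arg z : ℝ) * Complex.I) = Complex.exp (φ * Complex.I) := by
    have h := Complex.norm_mul_exp_arg_mul_I z
    rw [habs] at h
    have h2 : (r:ℂ) * Complex.exp ((Complex.arg z : ℝ) * Complex.I)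
        = (r:ℂ) * Complex.exp (φ * Complex.I) := by rw [h, hzeq]
    exact mul_left_cancel₀ (by exact_mod_cast hr.ne') h2
  calc Complex.exp (Complex.I * m * (Complex.arg z : ℝ))
      = Complex.exp ((m : ℂ) * ((Complex.arg z : ℝ) * Complex.I)) := by ring_nf
    _ = Complex.exp ((Complex.arg z : ℝ) * Complex.I) ^ m := Complex.exp_int_mul _ m
    _ = Complex.exp (φ * Complex.I) ^ m := by rw [harg]

open Real in
noncomputable def Kc (l : ℕ) (m : ℤ) : ℝ :=
  Real.sqrt ((2 * l + 1) / (4 * π) * ((l : ℤ) - m).toNat.factorial /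
      ((l : ℤ) + m).toNat.factorial)

open Real Complex in
lemma inner_phi (l1 l2 l : ℕ) (m1 m2 m : ℤ) (θ : ℝ) (hθ : 0 ≤ Real.sin θ) :
    (∫ φ in (0:ℝ)..(2*π),
      sphHarm l1 m1 ![Real.sin θ * Real.cos φ, Real.sin θ * Real.sin φ, Real.cos θ] *
      sphHarm l2 m2 ![Real.sin θ * Real.cos φ, Real.sin θ * Real.sin φ, Real.cos θ] *
      (starRingEnd ℂ) (sphHarm l m ![Real.sin θ * Real.cos φ, Real.sin θ * Real.sin φ, Real.cos θ]) *
      (Real.sin θ : ℂ))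
    = ((Kc l1 m1 * Kc l2 m2 * Kc l m *
        (assocLegendre l1 m1 (Real.cos θ) * assocLegendre l2 m2 (Real.cos θ) *
         assocLegendre l m (Real.cos θ)) * Real.sin θ : ℝ) : ℂ) *
      (if m1 + m2 - m = 0 then (2*π : ℂ) else 0) := by
  rcases eq_or_lt_of_le hθ with hs0 | hs0
  · -- sin θ = 0
    rw [← hs0]
    simp
  · -- sin θ > 0
    have hptw : ∀ φ : ℝ,
        sphHarm l1 m1 ![Real.sin θ * Real.cos φ, Real.sin θ * Real.sin φ, Real.cos θ] *
        sphHarm l2 m2 ![Real.sin θ * Real.cos φ, Real.sin θ * Real.sin φ, Real.cos θ] *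
        (starRingEnd ℂ) (sphHarm l m ![Real.sin θ * Real.cos φ, Real.sin θ * Real.sin φ, Real.cos θ]) *
        (Real.sin θ : ℂ)
        = ((Kc l1 m1 * Kc l2 m2 * Kc l m *
            (assocLegendre l1 m1 (Real.cos θ) * assocLegendre l2 m2 (Real.cos θ) *
             assocLegendre l m (Real.cos θ)) * Real.sin θ : ℝ) : ℂ) *
          Complex.exp (φ * Complex.I) ^ (m1 + m2 - m) := by
      intro φ
      have h1 := exp_arg_eq (Real.sin θ) hs0 φ m1
      have h2 := exp_arg_eq (Real.sin θ) hs0 φ m2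
      have h3 := exp_arg_eq (Real.sin θ) hs0 φ m
      unfold sphHarm Kc
      simp only [Matrix.cons_val_zero, Matrix.cons_val_one, Matrix.head_cons,
        Matrix.cons_val_two, Matrix.tail_cons]
      rw [h1, h2]
      rw [map_mul]
      rw [← Complex.exp_conj]
      have hconj : (starRingEnd ℂ) (Complex.I * m *
          (Complex.arg ((Real.sin θ * Real.cos φ : ℝ) + (Real.sin θ * Real.sin φ : ℝ) * Complex.I) : ℝ))
          = Complex.I * ((-m : ℤ) : ℂ) *
          (Complex.arg ((Real.sin θ * Real.cos φ : ℝ) + (Real.sin θ * Real.sin φ : ℝ) * Complex.I) : ℝ) := by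
        rw [map_mul, map_mul, Complex.conj_I, Complex.conj_ofReal, map_intCast]
        push_cast
        ring
      rw [hconj]
      have h3' := exp_arg_eq (Real.sin θ) hs0 φ (-m)
      rw [h3']
      rw [Complex.conj_ofReal]
      have hzpow : Complex.exp (φ * Complex.I) ^ m1 * Complex.exp (φ * Complex.I) ^ m2 *
          Complex.exp (φ * Complex.I) ^ (-m) = Complex.exp (φ * Complex.I) ^ (m1 + m2 - m) := by
        rw [← zpow_add₀ (Complex.exp_ne_zero _), ← zpow_add₀ (Complex.exp_ne_zero _),
          show m1 + m2 + -m = m1 + m2 - m by omega]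
      push_cast
      rw [← hzpow]
      ring
    rw [intervalIntegral.integral_congr (g := fun φ =>
      ((Kc l1 m1 * Kc l2 m2 * Kc l m *
        (assocLegendre l1 m1 (Real.cos θ) * assocLegendre l2 m2 (Real.cos θ) *
         assocLegendre l m (Real.cos θ)) * Real.sin θ : ℝ) : ℂ) *
      Complex.exp (φ * Complex.I) ^ (m1 + m2 - m)) (fun φ _ => hptw φ)]
    rw [intervalIntegral.integral_const_mul, int_exp_zpow]

end AuxTriple

/-- vanishing of the triple spherical-harmonic integral when
m ≠ m₁ + m₂ or l ∉ [|l₁-l₂|, l₁+l₂]. -/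
theorem triple_sphHarm_integral_eq_zero (l l1 l2 : ℕ) (m m1 m2 : ℤ)
    (hm : m.natAbs ≤ l) (h1 : m1.natAbs ≤ l1) (h2 : m2.natAbs ≤ l2)
    (hcond : m ≠ m1 + m2 ∨ (l : ℤ) < |(l1 : ℤ) - (l2 : ℤ)| ∨ l1 + l2 < l) :
    sphereIntegral
      (fun n => sphHarm l1 m1 n * sphHarm l2 m2 n * (starRingEnd ℂ) (sphHarm l m n)) = 0 := by
  unfold sphereIntegral
  rw [intervalIntegral.integral_congr (g := fun θ =>
      ((Kc l1 m1 * Kc l2 m2 * Kc l m *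
        (assocLegendre l1 m1 (Real.cos θ) * assocLegendre l2 m2 (Real.cos θ) *
         assocLegendre l m (Real.cos θ)) * Real.sin θ : ℝ) : ℂ) *
      (if m1 + m2 - m = 0 then (2*π : ℂ) else 0))
    (fun θ hθ => by
      rw [Set.uIcc_of_le Real.pi_pos.le] at hθ
      exact inner_phi l1 l2 l m1 m2 m θ
        (Real.sin_nonneg_of_nonneg_of_le_pi hθ.1 hθ.2))]
  by_cases hK : m1 + m2 - m = 0
  swap
  · simp [hK]
  · simp only [if_pos hK]
    rw [intervalIntegral.integral_mul_const]
    rw [intervalIntegral.integral_ofReal]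
    have hreal : (∫ θ in (0:ℝ)..π, Kc l1 m1 * Kc l2 m2 * Kc l m *
        (assocLegendre l1 m1 (Real.cos θ) * assocLegendre l2 m2 (Real.cos θ) *
         assocLegendre l m (Real.cos θ)) * Real.sin θ) = 0 := by
      have hrw : (fun θ => Kc l1 m1 * Kc l2 m2 * Kc l m *
          (assocLegendre l1 m1 (Real.cos θ) * assocLegendre l2 m2 (Real.cos θ) *
           assocLegendre l m (Real.cos θ)) * Real.sin θ)
          = fun θ => (Kc l1 m1 * Kc l2 m2 * Kc l m) * (Real.sin θ *
          (assocLegendre l1 m1 (Real.cos θ) * assocLegendre l2 m2 (Real.cos θ) *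
           assocLegendre l m (Real.cos θ))) := by
        funext θ; ring
      rw [hrw, intervalIntegral.integral_const_mul]
      have hr : (l : ℤ) < |(l1 : ℤ) - (l2 : ℤ)| ∨ l1 + l2 < l := by
        rcases hcond with hc | hc
        · exact absurd (by omega) hc
        · exact hc
      rcases hr with habs | hgt
      · have hsplit : (l:ℤ) + l2 < l1 ∨ (l:ℤ) + l1 < l2 := by
          rcases abs_cases ((l1:ℤ) - (l2:ℤ)) with ⟨he, _⟩ | ⟨he, _⟩ <;> omega
        rcases hsplit with hc1 | hc1
        · have hcore := core_theta l2 l l1 m2 m m1 h2 hm h1 (by omega) (by omega) (by omega)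
          have : (fun θ => Real.sin θ *
              (assocLegendre l1 m1 (Real.cos θ) * assocLegendre l2 m2 (Real.cos θ) *
               assocLegendre l m (Real.cos θ)))
              = fun θ => Real.sin θ *
              (assocLegendre l2 m2 (Real.cos θ) * assocLegendre l m (Real.cos θ) *
               assocLegendre l1 m1 (Real.cos θ)) := by funext θ; ring
          rw [this, hcore, mul_zero]
        · have hcore := core_theta l1 l l2 m1 m m2 h1 hm h2 (by omega) (by omega) (by omega)
          have : (fun θ => Real.sin θ *
              (assocLegendre l1 m1 (Real.cos θ) * assocLegendre l2 m2 (Real.cos θ) *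
               assocLegendre l m (Real.cos θ)))
              = fun θ => Real.sin θ *
              (assocLegendre l1 m1 (Real.cos θ) * assocLegendre l m (Real.cos θ) *
               assocLegendre l2 m2 (Real.cos θ)) := by funext θ; ring
          rw [this, hcore, mul_zero]
      · have hcore := core_theta l1 l2 l m1 m2 m h1 h2 hm (by omega) (by omega) (by omega)
        rw [hcore, mul_zero]
    rw [hreal]
    simp
end
end

section
/- Let τ(t) = 1 − 0.4 e^{−4t} and define the BKW distribution f(t,v) = (2πτ(t))^{−3/2} exp(−|v|²/(2τ(t))) [ 1 + ((1−τ(t))/τ(t)) ( |v|²/(2τ(t)) − 3/2 ) ] for t ≥ 0 and v ∈ ℝ³. Then f is an exact solution of the spatially homogeneous linear Fokker-Planck equation for D = 3: ∂f/∂t (t,v) = (D−1) ∇_v·( ∇_v f(t,v) + f(t,v) v ) for all t ≥ 0 and v ∈ ℝ³. -/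
open MeasureTheory Real
open scoped BigOperators Classical

noncomputable section

/- ### auxiliary machinery -/

def bkwC (τ : ℝ) : ℝ := (2 * π * τ) ^ (-(3 : ℝ) / 2)
def bkwP (τ S : ℝ) : ℝ := 1 + (1 - τ) / τ * (S / (2 * τ) - 3 / 2)
def bkwG (τ S : ℝ) : ℝ := bkwC τ * Real.exp (-S / (2 * τ)) * bkwP τ S
def bkwGS (τ S : ℝ) : ℝ :=
  bkwC τ * Real.exp (-S / (2 * τ)) *
    (-(1 / (2 * τ)) * bkwP τ S + (1 - τ) / τ * (1 / (2 * τ)))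
def bkwGSS (τ S : ℝ) : ℝ :=
  bkwC τ * Real.exp (-S / (2 * τ)) *
    (-(1 / (2 * τ)) * (-(1 / (2 * τ)) * bkwP τ S + (1 - τ) / τ * (1 / (2 * τ)))
      + -(1 / (2 * τ)) * ((1 - τ) / τ * (1 / (2 * τ))))
def bkwGt (τ S : ℝ) : ℝ :=
  bkwC τ * Real.exp (-S / (2 * τ)) *
    ((-(3 / (2 * τ)) + S / (2 * τ ^ 2)) * bkwP τ S
      + ((-1 / τ ^ 2) * (S / (2 * τ) - 3 / 2) + (1 - τ) / τ * (-(S / (2 * τ ^ 2)))))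

lemma bkw_hPS (τ S : ℝ) : HasDerivAt (fun S => bkwP τ S) ((1 - τ) / τ * (1 / (2 * τ))) S := by
  unfold bkwP
  exact ((((hasDerivAt_id' S).div_const (2 * τ)).sub_const (3 / 2)).const_mul ((1 - τ) / τ)).const_add 1

lemma bkw_hexpS (τ S : ℝ) :
    HasDerivAt (fun S => Real.exp (-S / (2 * τ))) (Real.exp (-S / (2 * τ)) * (-1 / (2 * τ))) S :=
  (((hasDerivAt_id' S).neg.div_const (2 * τ))).exp

lemma bkw_hGS (τ S : ℝ) : HasDerivAt (fun S => bkwG τ S) (bkwGS τ S) S := by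
  unfold bkwG bkwGS
  have h := ((bkw_hexpS τ S).const_mul (bkwC τ)).fun_mul (bkw_hPS τ S)
  refine h.congr_deriv ?_
  ring

lemma bkw_hGSS (τ S : ℝ) : HasDerivAt (fun S => bkwGS τ S) (bkwGSS τ S) S := by
  unfold bkwGS bkwGSS
  have h := ((bkw_hexpS τ S).const_mul (bkwC τ)).fun_mul
    (((bkw_hPS τ S).const_mul (-(1 / (2 * τ)))).add_const ((1 - τ) / τ * (1 / (2 * τ))))
  refine h.congr_deriv ?_
  ring

lemma bkw_hGt (S : ℝ) {τ : ℝ} (hτ : 0 < τ) :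
    HasDerivAt (fun τ' => bkwG τ' S) (bkwGt τ S) τ := by
  have hπ := Real.pi_pos
  have h2πτ : (2 * π * τ) ≠ 0 := by positivity
  have h2τ : (2 * τ) ≠ 0 := by positivity
  have hc : HasDerivAt bkwC (-(3 / (2 * τ)) * bkwC τ) τ := by
    unfold bkwC
    have h := (HasDerivAt.const_mul (2 * π) (hasDerivAt_id' τ)).rpow_const
      (p := -(3 : ℝ) / 2) (Or.inl h2πτ)
    convert h using 1
    rw [Real.rpow_sub_one h2πτ]
    field_simp
  have hE : HasDerivAt (fun τ' : ℝ => Real.exp (-S / (2 * τ')))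
      (Real.exp (-S / (2 * τ)) * ((0 * (2 * τ) - -S * (2 * 1)) / (2 * τ) ^ 2)) τ :=
    ((hasDerivAt_const τ (-S)).div ((hasDerivAt_id' τ).const_mul 2) h2τ).exp
  have hcE : HasDerivAt (fun τ' => bkwC τ' * Real.exp (-S / (2 * τ')))
      (-(3 / (2 * τ)) * bkwC τ * Real.exp (-S / (2 * τ))
        + bkwC τ * (Real.exp (-S / (2 * τ)) * ((0 * (2 * τ) - -S * (2 * 1)) / (2 * τ) ^ 2))) τ :=
    hc.mul hE
  have hP : HasDerivAt (fun τ' => bkwP τ' S)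
      ((-1 * τ - (1 - τ) * 1) / τ ^ 2 * (S / (2 * τ) - 3 / 2)
        + (1 - τ) / τ * ((0 * (2 * τ) - S * (2 * 1)) / (2 * τ) ^ 2)) τ := by
    unfold bkwP
    exact ((((hasDerivAt_id' τ).const_sub 1).div (hasDerivAt_id' τ) hτ.ne').mul
      (((hasDerivAt_const τ S).div ((hasDerivAt_id' τ).const_mul 2) h2τ).sub_const (3 / 2))).const_add 1
  have hall : HasDerivAt (fun τ' => bkwC τ' * Real.exp (-S / (2 * τ')) * bkwP τ' S)
      ((-(3 / (2 * τ)) * bkwC τ * Real.exp (-S / (2 * τ))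
          + bkwC τ * (Real.exp (-S / (2 * τ)) * ((0 * (2 * τ) - -S * (2 * 1)) / (2 * τ) ^ 2)))
        * bkwP τ S
        + bkwC τ * Real.exp (-S / (2 * τ)) *
          ((-1 * τ - (1 - τ) * 1) / τ ^ 2 * (S / (2 * τ) - 3 / 2)
            + (1 - τ) / τ * ((0 * (2 * τ) - S * (2 * 1)) / (2 * τ) ^ 2))) τ := hcE.mul hP
  unfold bkwG
  convert hall using 1
  unfold bkwGt
  field_simp
  ring

lemma bkw_key {τ : ℝ} (hτ : 0 < τ) (S : ℝ) :
    bkwGt τ S * (4 * (1 - τ)) =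
      2 * (6 * bkwGS τ S + 3 * bkwG τ S + (4 * bkwGSS τ S + 2 * bkwGS τ S) * S) := by
  unfold bkwGt bkwGS bkwGSS bkwG bkwP
  have h := hτ.ne'
  field_simp
  ring

def bkwL (v : V3) : V3 →L[ℝ] ℝ :=
  ∑ j, (2 * v j) • (ContinuousLinearMap.proj j : V3 →L[ℝ] ℝ)

lemma bkw_hSfd (v : V3) : HasFDerivAt (fun w : V3 => ∑ j, w j ^ 2) (bkwL v) v := by
  unfold bkwL
  refine HasFDerivAt.fun_sum fun j _ => ?_
  have h : HasFDerivAt (fun w : V3 => w j * w j)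
      (v j • (ContinuousLinearMap.proj j : V3 →L[ℝ] ℝ)
        + v j • (ContinuousLinearMap.proj j : V3 →L[ℝ] ℝ)) v :=
    ((ContinuousLinearMap.proj j : V3 →L[ℝ] ℝ).hasFDerivAt).mul
      ((ContinuousLinearMap.proj j : V3 →L[ℝ] ℝ).hasFDerivAt)
  rw [show (fun w : V3 => w j * w j) = fun w : V3 => w j ^ 2 from
    funext fun w => (pow_two (w j)).symm] at h
  rw [show (2 * v j) = v j + v j by ring, add_smul]
  exact h

lemma bkwL_single (v : V3) (i : Fin 3) : bkwL v (Pi.single i 1) = 2 * v i := by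
  simp [bkwL, ContinuousLinearMap.sum_apply, ContinuousLinearMap.smul_apply,
    ContinuousLinearMap.proj_apply, Pi.single_apply, smul_eq_mul, mul_ite,
    Finset.sum_ite_eq', mul_one, mul_zero]

lemma bkw_pd_of_hasFDerivAt {f : V3 → ℝ} {f' : V3 →L[ℝ] ℝ} {v : V3}
    (h : HasFDerivAt f f' v) (i : Fin 3) : pd i f v = f' (Pi.single i 1) := by
  unfold pd
  rw [h.fderiv]

lemma bkw_pd_comp {g : ℝ → ℝ} {g' : ℝ} {v : V3}
    (hg : HasDerivAt g g' (∑ j, v j ^ 2)) (i : Fin 3) :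
    pd i (fun w => g (∑ j, w j ^ 2)) v = g' * (2 * v i) := by
  have h : HasFDerivAt (fun w : V3 => g (∑ j, w j ^ 2)) (g' • bkwL v) v :=
    hg.comp_hasFDerivAt v (bkw_hSfd v)
  rw [bkw_pd_of_hasFDerivAt h i]
  simp [bkwL_single, smul_eq_mul]

lemma bkw_pd_mul_coord {g : ℝ → ℝ} {g' : ℝ} {v : V3}
    (hg : HasDerivAt g g' (∑ j, v j ^ 2)) (i : Fin 3) :
    pd i (fun w => g (∑ j, w j ^ 2) * w i) v
      = g (∑ j, v j ^ 2) + g' * (2 * v i) * v i := by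
  have h : HasFDerivAt (fun w : V3 => g (∑ j, w j ^ 2) * w i)
      (g (∑ j, v j ^ 2) • (ContinuousLinearMap.proj i : V3 →L[ℝ] ℝ)
        + v i • (g' • bkwL v)) v :=
    (hg.comp_hasFDerivAt v (bkw_hSfd v)).mul
      ((ContinuousLinearMap.proj i : V3 →L[ℝ] ℝ).hasFDerivAt)
  rw [bkw_pd_of_hasFDerivAt h i]
  simp [bkwL_single, smul_eq_mul, Pi.single_eq_same]
  ring

lemma bkw_fe (s : ℝ) (w : V3) : fBKW s w = bkwG (tau s) (∑ j, w j ^ 2) := by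
  unfold fBKW bkwG bkwC bkwP nrm
  rw [Real.sq_sqrt (by positivity)]

lemma bkw_htau (t : ℝ) : HasDerivAt tau (4 * (1 - tau t)) t := by
  have h := HasDerivAt.const_sub 1
    (((hasDerivAt_id' t).const_mul (-4)).exp.const_mul (0.4 : ℝ))
  unfold tau
  refine h.congr_deriv ?_
  ring


/-- the BKW distribution solves the spatially homogeneous linear
Fokker-Planck equation ∂f/∂t = (D-1) ∇·(∇f + f v) with D = 3. -/
theorem bkw_solves_linear_FP :
    ∀ t : ℝ, 0 ≤ t → ∀ v : V3,
      deriv (fun s => fBKW s v) t =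
        ((3 : ℝ) - 1) * div3 (fun w i => pd i (fBKW t) w + fBKW t w * w i) v := by
  intro t ht v
  have hτ : 0 < tau t := by
    unfold tau
    nlinarith [Real.exp_le_one_iff.mpr (show -4 * t ≤ 0 by linarith), Real.exp_pos (-4 * t)]
  have hL : deriv (fun s => fBKW s v) t
      = bkwGt (tau t) (∑ j, v j ^ 2) * (4 * (1 - tau t)) := by
    rw [show (fun s => fBKW s v) = fun s => bkwG (tau s) (∑ j, v j ^ 2) from
      funext fun s => bkw_fe s v]
    exact ((bkw_hGt (∑ j, v j ^ 2) hτ).comp t (bkw_htau t)).deriv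
  have hpd : ∀ (w : V3) (j : Fin 3),
      pd j (fBKW t) w = bkwGS (tau t) (∑ k, w k ^ 2) * (2 * w j) := by
    intro w j
    rw [show fBKW t = fun u => bkwG (tau t) (∑ k, u k ^ 2) from funext fun u => bkw_fe t u]
    exact bkw_pd_comp (bkw_hGS (tau t) (∑ k, w k ^ 2)) j
  have hhd : HasDerivAt (fun x => 2 * bkwGS (tau t) x + bkwG (tau t) x)
      (2 * bkwGSS (tau t) (∑ j, v j ^ 2) + bkwGS (tau t) (∑ j, v j ^ 2)) (∑ j, v j ^ 2) :=
    ((bkw_hGSS (tau t) _).const_mul 2).add (bkw_hGS (tau t) _)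
  have hdivEq : div3 (fun w i => pd i (fBKW t) w + fBKW t w * w i) v
      = ∑ i, ((2 * bkwGS (tau t) (∑ j, v j ^ 2) + bkwG (tau t) (∑ j, v j ^ 2))
          + (2 * bkwGSS (tau t) (∑ j, v j ^ 2) + bkwGS (tau t) (∑ j, v j ^ 2))
            * (2 * v i) * v i) := by
    unfold div3
    refine Finset.sum_congr rfl fun i _ => ?_
    show pd i (fun w => pd i (fBKW t) w + fBKW t w * w i) v = _
    rw [show (fun w => pd i (fBKW t) w + fBKW t w * w i)
        = fun w => (2 * bkwGS (tau t) (∑ k, w k ^ 2) + bkwG (tau t) (∑ k, w k ^ 2)) * w i from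
      funext fun w => by rw [hpd, bkw_fe]; ring]
    exact bkw_pd_mul_coord hhd i
  rw [hL, hdivEq]
  have hkey := bkw_key hτ (∑ j, v j ^ 2)
  simp only [Fin.sum_univ_three] at hkey ⊢
  linear_combination hkey
end
end
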